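/- Let (u,v,w) be a degree-(m+2) codifferential with v ≠ (0,0). Choose b₁,b₂ ∈ K with a₃b₂ − a₄b₁ = 1 and set k = a₁b₁ + a₂b₂; then k does not depend on the choice of (b₁,b₂). If k = 0 then (u,v,w) is equivalent to d_* = ((0,0),(1,0),(0,0)); if k ≠ 0 then (u,v,w) is equivalent to d_# = ((0,1),(1,0),(−(m+2),0)). -/

import Mathlib

namespace LinfClassification

variable {K : Type*} [Field K] [CharZero K]

/-- A degree-(m+2) structure `((a₁,a₂),(a₃,a₄),(a₅,a₆))` on the 1|2-dimensional
graded space, encoding the odd coderivation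
`d = a₁ψ^{1,0,m+1}_3 + a₂ψ^{0,1,m+1}_3 + a₃ψ^{0,0,m+2}_1 + a₄ψ^{0,0,m+2}_2
 + a₅ψ^{1,1,m}_1 + a₆ψ^{1,1,m}_2`. -/
abbrev Str (K : Type*) := (K × K) × (K × K) × (K × K)

/-- The six codifferential equations expressing `[d,d] = 0`. -/
def IsCodiff (m : ℕ) (d : Str K) : Prop :=
  d.1.1 * d.2.2.1 + d.1.2 * d.2.2.2 = 0 ∧
  d.1.1 * d.2.1.1 + d.1.2 * d.2.1.2 = 0 ∧
  d.2.1.1 * (d.2.2.1 + ((m : K) + 2) * d.1.2) = 0 ∧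
  d.2.1.2 * (d.2.2.1 + ((m : K) + 2) * d.1.2) = 0 ∧
  d.2.1.1 * (d.2.2.2 - ((m : K) + 2) * d.1.1) = 0 ∧
  d.2.1.2 * (d.2.2.2 - ((m : K) + 2) * d.1.1) = 0

/-- Action of `(g, q) ∈ GL₂(K) × Kˣ` with `g = [[p, q'], [r, s]]`
(`det g = p·s - q'·r ≠ 0`) and scalar `t ≠ 0` on a degree-(m+2) structure:
`(g,t)·(u,v,w) = (tᵐ·(u g), t^{m+2}·g⁻¹ v, det(g)·tᵐ·g⁻¹ w)`,
`u` a row vector and `v, w` column vectors. -/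
def act (m : ℕ) (p q r s t : K) (d : Str K) : Str K :=
  ((t ^ m * (d.1.1 * p + d.1.2 * r), t ^ m * (d.1.1 * q + d.1.2 * s)),
   (t ^ (m + 2) * (p * s - q * r)⁻¹ * (s * d.2.1.1 - q * d.2.1.2),
    t ^ (m + 2) * (p * s - q * r)⁻¹ * (-r * d.2.1.1 + p * d.2.1.2)),
   (t ^ m * (s * d.2.2.1 - q * d.2.2.2),
    t ^ m * (-r * d.2.2.1 + p * d.2.2.2)))

/-- Linear equivalence: two degree-(m+2) structures lie in the same orbit. -/
def Equiv' (m : ℕ) (d d' : Str K) : Prop :=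
  ∃ p q r s t : K, p * s - q * r ≠ 0 ∧ t ≠ 0 ∧ act m p q r s t d = d'

/-- The normal form `d_∞ = ψ^{1,1,m}_1`. -/
def dInf : Str K := ((0, 0), (0, 0), (1, 0))

/-- The normal form `d_λ = ψ^{0,1,m+1}_3 + λψ^{1,1,m}_1`. -/
def dLam (lam : K) : Str K := ((0, 1), (0, 0), (lam, 0))

/-- The normal form `d_* = ψ^{0,0,m+2}_1`. -/
def dStar : Str K := ((0, 0), (1, 0), (0, 0))

/-- The normal form `d_# = ψ^{0,1,m+1}_3 + ψ^{0,0,m+2}_1 - (m+2)ψ^{1,1,m}_1`. -/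
def dSharp (m : ℕ) : Str K := ((0, 1), (1, 0), (-((m : K) + 2), 0))

/-- For a degree-(m+2) codifferential with `v ≠ (0,0)`: choosing `b₁, b₂` with
`a₃b₂ - a₄b₁ = 1` and setting `k = a₁b₁ + a₂b₂`, the value `k` is independent of
the choice of `(b₁, b₂)`; if `k = 0` the structure is equivalent to `d_*`, and if
`k ≠ 0` it is equivalent to `d_#`. -/
theorem equiv_dStar_or_dSharp (m : ℕ) (d : Str K) (hd : IsCodiff m d)
    (hv : d.2.1 ≠ (0, 0)) (b1 b2 : K) (hb : d.2.1.1 * b2 - d.2.1.2 * b1 = 1) :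
    (∀ b1' b2' : K, d.2.1.1 * b2' - d.2.1.2 * b1' = 1 →
      d.1.1 * b1' + d.1.2 * b2' = d.1.1 * b1 + d.1.2 * b2) ∧
    (d.1.1 * b1 + d.1.2 * b2 = 0 → Equiv' m d dStar) ∧
    (d.1.1 * b1 + d.1.2 * b2 ≠ 0 → Equiv' m d (dSharp m)) := by
  obtain ⟨⟨a1, a2⟩, ⟨a3, a4⟩, a5, a6⟩ := d
  simp only [IsCodiff] at hd
  obtain ⟨h1, h2, h3, h4, h5, h6⟩ := hd
  simp only at hv hb ⊢
  have hv' : a3 ≠ 0 ∨ a4 ≠ 0 := by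
    by_contra h
    push_neg at h
    exact hv (by simp [h.1, h.2])
  have hX : a5 + ((m : K) + 2) * a2 = 0 := by
    rcases hv' with h | h
    · exact (mul_eq_zero.mp h3).resolve_left h
    · exact (mul_eq_zero.mp h4).resolve_left h
  have hY : a6 - ((m : K) + 2) * a1 = 0 := by
    rcases hv' with h | h
    · exact (mul_eq_zero.mp h5).resolve_left h
    · exact (mul_eq_zero.mp h6).resolve_left h
  have ha5 : a5 = -(((m : K) + 2) * a2) := by linear_combination hX
  have ha6 : a6 = ((m : K) + 2) * a1 := by linear_combination hY
  refine ⟨?_, ?_, ?_⟩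
  · intro b1' b2' hb'
    have hd3 : a3 * (a1 * b1' + a2 * b2' - (a1 * b1 + a2 * b2)) = 0 := by
      linear_combination (b1' - b1) * h2 + a2 * hb' - a2 * hb
    have hd4 : a4 * (a1 * b1' + a2 * b2' - (a1 * b1 + a2 * b2)) = 0 := by
      linear_combination (b2' - b2) * h2 - a1 * hb' + a1 * hb
    rcases hv' with h | h
    · exact sub_eq_zero.mp ((mul_eq_zero.mp hd3).resolve_left h)
    · exact sub_eq_zero.mp ((mul_eq_zero.mp hd4).resolve_left h)
  · intro hk
    have ha1 : a1 = 0 := by linear_combination b2 * h2 - a4 * hk - a1 * hb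
    have ha2 : a2 = 0 := by linear_combination a3 * hk - b1 * h2 - a2 * hb
    refine ⟨a3, b1, a4, b2, 1, ?_, one_ne_zero, ?_⟩
    · have : a3 * b2 - b1 * a4 = 1 := by linear_combination hb
      rw [this]; exact one_ne_zero
    · have hΔ : a3 * b2 - b1 * a4 = 1 := by linear_combination hb
      simp only [act, dStar, hΔ, inv_one, one_pow, one_mul, mul_one,
        ha1, ha2, ha5, ha6, Prod.mk.injEq]
      refine ⟨⟨by ring, by ring⟩, ⟨by linear_combination hb, by ring⟩, by ring, by ring⟩
  · intro hk
    set k : K := a1 * b1 + a2 * b2 with hkdef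
    have hΔ : a3 * (b2 * k⁻¹) - b1 * k⁻¹ * a4 = k⁻¹ := by
      field_simp
      linear_combination hb
    refine ⟨a3, b1 * k⁻¹, a4, b2 * k⁻¹, 1, ?_, one_ne_zero, ?_⟩
    · rw [hΔ]; exact inv_ne_zero hk
    · have hinv : (a3 * (b2 * k⁻¹) - b1 * k⁻¹ * a4)⁻¹ = k := by rw [hΔ, inv_inv]
      simp only [act, dSharp, hinv, one_pow, one_mul, mul_one, ha5, ha6, Prod.mk.injEq]
      refine ⟨⟨by linear_combination h2, ?_⟩, ⟨?_, by ring⟩, ?_, by linear_combination ((m : K) + 2) * h2⟩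
      · field_simp
        exact hkdef.symm
      · field_simp
        linear_combination hb
      · field_simp
        ring

end LinfClassification
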